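/- arXiv:2303.06360 — 2 statements merged into one kernel-verified Lean document; each statement's English description precedes it below -/
import Mathlib

section
/- Let K ≥ 1, let p ∈ [0,1], and let g_1, …, g_K be fixed vectors in ℝ^d. Let ζ_1, …, ζ_K be independent Bernoulli(p) random variables (ζ_k = 1 with probability p, ζ_k = 0 with probability 1 − p), and adopt the convention that ζ_k / (∑_{m=1}^K ζ_m) = 0 whenever ∑_{m=1}^K ζ_m = 0. Then the expectation of the randomly pruned aggregate ∑_{k=1}^K (ζ_k / ∑_{m=1}^K ζ_m) · g_k equals (1 − (1 − p)^K) · (1/K) ∑_{k=1}^K g_k. In other words, the pruned aggregated gradient equals the non-pruned average gradient scaled by the factor 1 − (1 − p)^K. -/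
open Finset

private lemma fedlp_weight_sum (K : ℕ) (p : ℝ) :
    ∑ ζ : Fin K → Bool, (∏ m, if ζ m then p else 1 - p) = 1 := by
  have h := Finset.prod_univ_sum (fun _ : Fin K => (univ : Finset Bool))
      (fun _ b => if b then p else 1 - p)
  rw [Fintype.piFinset_univ] at h
  rw [← h]
  simp

private lemma fedlp_sym (K : ℕ) (p : ℝ) (k j : Fin K) :
    ∑ ζ : Fin K → Bool, (∏ m, if ζ m then p else 1 - p) *
        ((if ζ k then (1:ℝ) else 0) / ∑ m, if ζ m then (1:ℝ) else 0)
    = ∑ ζ : Fin K → Bool, (∏ m, if ζ m then p else 1 - p) *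
        ((if ζ j then (1:ℝ) else 0) / ∑ m, if ζ m then (1:ℝ) else 0) := by
  classical
  refine Fintype.sum_equiv ((Equiv.swap k j).arrowCongr (Equiv.refl Bool)) _ _ ?_
  intro ζ
  have hval : ∀ m, ((Equiv.swap k j).arrowCongr (Equiv.refl Bool) ζ) m
      = ζ (Equiv.swap k j m) := by
    intro m
    simp [Equiv.arrowCongr, Equiv.swap_apply_def]
  have hW : (∏ m, if ((Equiv.swap k j).arrowCongr (Equiv.refl Bool) ζ) m then p else 1 - p)
      = ∏ m, if ζ m then p else 1 - p := by
    simp only [hval]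
    exact Equiv.prod_comp (Equiv.swap k j) (fun m => if ζ m then p else 1 - p)
  have hS : (∑ m, if ((Equiv.swap k j).arrowCongr (Equiv.refl Bool) ζ) m then (1:ℝ) else 0)
      = ∑ m, if ζ m then (1:ℝ) else 0 := by
    simp only [hval]
    exact Equiv.sum_comp (Equiv.swap k j) (fun m => if ζ m then (1:ℝ) else 0)
  have hj : ((Equiv.swap k j).arrowCongr (Equiv.refl Bool) ζ) j = ζ k := by
    rw [hval]; simp
  rw [hW, hS, hj]

private lemma fedlp_coeff (K : ℕ) (hK : 1 ≤ K) (p : ℝ) (k : Fin K) :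
    ∑ ζ : Fin K → Bool, (∏ m, if ζ m then p else 1 - p) *
        ((if ζ k then (1:ℝ) else 0) / ∑ m, if ζ m then (1:ℝ) else 0)
    = (1 - (1 - p) ^ K) / K := by
  classical
  set C : Fin K → ℝ := fun j => ∑ ζ : Fin K → Bool, (∏ m, if ζ m then p else 1 - p) *
      ((if ζ j then (1:ℝ) else 0) / ∑ m, if ζ m then (1:ℝ) else 0) with hC
  have htot : ∑ j : Fin K, C j = 1 - (1 - p) ^ K := by
    rw [hC]
    rw [Finset.sum_comm]
    have hpt : ∀ ζ : Fin K → Bool,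
        (∑ j : Fin K, (∏ m, if ζ m then p else 1 - p) *
          ((if ζ j then (1:ℝ) else 0) / ∑ m, if ζ m then (1:ℝ) else 0))
        = (∏ m, if ζ m then p else 1 - p)
          - (if ζ = (fun _ => false) then (1 - p) ^ K else 0) := by
      intro ζ
      rw [← Finset.mul_sum, ← Finset.sum_div]
      by_cases hζ : ζ = (fun _ => false)
      · subst hζ; simp
      · have hm : ∃ m, ζ m = true := by
          by_contra hcon
          push_neg at hcon
          exact hζ (funext fun m => by simpa using hcon m)
        obtain ⟨m, hm⟩ := hm
        have hpos : (0:ℝ) < ∑ m, if ζ m then (1:ℝ) else 0 := by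
          refine Finset.sum_pos' (fun i _ => by positivity) ⟨m, Finset.mem_univ m, by simp [hm]⟩
        rw [div_self hpos.ne', if_neg hζ, mul_one, sub_zero]
    rw [Finset.sum_congr rfl (fun ζ _ => hpt ζ), Finset.sum_sub_distrib,
      fedlp_weight_sum K p]
    congr 1
    rw [Finset.sum_ite_eq' Finset.univ (fun _ => false) (fun _ => (1 - p) ^ K)]
    simp
  have hall : ∀ j : Fin K, C j = C k := fun j => fedlp_sym K p j k
  have hKtot : (K : ℝ) * C k = 1 - (1 - p) ^ K := by
    rw [← htot, Finset.sum_congr rfl (fun j _ => hall j)]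
    simp [mul_comm]
  have hKne : (K : ℝ) ≠ 0 := Nat.cast_ne_zero.mpr (by omega)
  show C k = (1 - (1 - p) ^ K) / K
  field_simp [hKne] at hKtot ⊢
  linarith [hKtot]

/-- **FedLP Proposition 1 (vector form).**
Let `K ≥ 1`, `p ∈ [0,1]`, and `g 1, …, g K` be fixed vectors in `ℝ^d`.
With `ζ : Fin K → Bool` distributed as a product of independent `Bernoulli p`
variables (weight `∏ m, if ζ m then p else 1 - p`), and the convention
`0 / 0 = 0` (which is Lean's default for real division), the expectation of
the pruned aggregate `∑ k, (ζ k / ∑ m, ζ m) • g k` equals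
`(1 - (1 - p)^K) • ((1/K) • ∑ k, g k)`. -/
theorem fedlp_pruned_aggregate_expectation
    (K d : ℕ) (hK : 1 ≤ K) (p : ℝ) (hp0 : 0 ≤ p) (hp1 : p ≤ 1)
    (g : Fin K → (Fin d → ℝ)) :
    ∑ ζ : Fin K → Bool,
      (∏ m : Fin K, if ζ m then p else 1 - p) •
        (∑ k : Fin K,
          (((if ζ k then (1 : ℝ) else 0) /
              ∑ m : Fin K, if ζ m then (1 : ℝ) else 0) • g k))
      = (1 - (1 - p) ^ K) • ((K : ℝ)⁻¹ • ∑ k : Fin K, g k) := by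
  classical
  simp only [Finset.smul_sum, smul_smul]
  rw [Finset.sum_comm]
  have : ∀ k : Fin K,
      (∑ ζ : Fin K → Bool, ((∏ m, if ζ m then p else 1 - p) *
        ((if ζ k then (1:ℝ) else 0) / ∑ m, if ζ m then (1:ℝ) else 0)) • g k)
      = ((1 - (1 - p) ^ K) / K) • g k := by
    intro k
    rw [← Finset.sum_smul, fedlp_coeff K hK p k]
  rw [Finset.sum_congr rfl (fun k _ => this k), ← Finset.smul_sum,
    div_eq_mul_inv, Finset.smul_sum]
end

section
/- Let K ≥ 1 and p ∈ [0,1], and let ζ_1, …, ζ_K be independent Bernoulli(p) random variables, with the convention that ζ_k / (∑_{m=1}^K ζ_m) = 0 whenever ∑_{m=1}^K ζ_m = 0. Then for every fixed index k ∈ {1, …, K}, E[ ζ_k / ∑_{m=1}^K ζ_m ] = (1 − (1 − p)^K) / K. -/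
/-- **FedLP per-client expected aggregation weight.**
With `ζ : Fin K → Bool` distributed as a product of independent `Bernoulli p`
variables (weight `∏ m, if ζ m then p else 1 - p`), and the convention
`0 / 0 = 0`, for every fixed client `k` one has
`E[ζ k / ∑ m, ζ m] = (1 - (1 - p)^K) / K`. -/
theorem fedlp_expected_weight_single
    (K : ℕ) (hK : 1 ≤ K) (p : ℝ) (hp0 : 0 ≤ p) (hp1 : p ≤ 1) (k : Fin K) :
    ∑ ζ : Fin K → Bool,
      (∏ m : Fin K, if ζ m then p else 1 - p) *
        ((if ζ k then (1 : ℝ) else 0) /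
          ∑ m : Fin K, if ζ m then (1 : ℝ) else 0)
      = (1 - (1 - p) ^ K) / K := by
  set F : Fin K → ℝ := fun k' => ∑ ζ : Fin K → Bool,
      (∏ m : Fin K, if ζ m then p else 1 - p) *
        ((if ζ k' then (1 : ℝ) else 0) /
          ∑ m : Fin K, if ζ m then (1 : ℝ) else 0) with hF
  have hsym : ∀ k' : Fin K, F k' = F k := by
    intro k'
    have hb : Function.Bijective (fun ζ : Fin K → Bool => ζ ∘ Equiv.swap k k') :=
      (Equiv.arrowCongr (Equiv.swap k k') (Equiv.refl Bool)).symm.bijective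
    refine Fintype.sum_bijective _ hb _ _ ?_
    intro ζ
    simp only [Function.comp]
    congr 1
    · exact (Equiv.prod_comp (Equiv.swap k k') fun m => if ζ m then p else 1 - p).symm
    · congr 1
      · simp only [Equiv.swap_apply_left]
      · exact (Equiv.sum_comp (Equiv.swap k k') fun m => if ζ m then (1:ℝ) else 0).symm
  have htot : ∑ ζ : Fin K → Bool, (∏ m : Fin K, if ζ m then p else 1 - p) = 1 := by
    rw [← Fintype.prod_sum (fun (_ : Fin K) (b : Bool) => if b then p else 1 - p)]
    simp
  have hsum : ∑ k' : Fin K, F k' = 1 - (1 - p) ^ K := by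
    rw [hF, Finset.sum_comm]
    have : ∀ ζ : Fin K → Bool,
        ∑ k' : Fin K, (∏ m : Fin K, if ζ m then p else 1 - p) *
          ((if ζ k' then (1 : ℝ) else 0) / ∑ m : Fin K, if ζ m then (1 : ℝ) else 0)
        = (∏ m : Fin K, if ζ m then p else 1 - p) *
            (if ζ = (fun _ => false) then 0 else 1) := by
      intro ζ
      rw [← Finset.mul_sum, ← Finset.sum_div]
      by_cases h : ζ = fun _ => false
      · subst h; simp
      · have hS : (∑ m : Fin K, if ζ m then (1:ℝ) else 0) ≠ 0 := by
          have : ∃ m, ζ m = true := by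
            by_contra hc
            push_neg at hc
            exact h (funext fun m => by simpa using hc m)
          obtain ⟨m, hm⟩ := this
          have hpos : 0 < ∑ m : Fin K, if ζ m then (1:ℝ) else 0 := by
            apply Finset.sum_pos' (fun i _ => by positivity)
            exact ⟨m, Finset.mem_univ m, by simp [hm]⟩
          exact ne_of_gt hpos
        rw [div_self hS, if_neg h]
    rw [Finset.sum_congr rfl fun ζ _ => this ζ]
    rw [← Finset.sum_filter_add_sum_filter_not Finset.univ (fun ζ => ζ = (fun _ => false))]
    have h1 : (Finset.univ.filter (fun ζ : Fin K → Bool => ζ = (fun _ => false)))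
        = {fun _ => false} := by
      ext ζ; simp
    rw [h1]
    rw [Finset.sum_singleton]
    norm_num
    have h2 : (∑ ζ ∈ Finset.univ.filter (fun ζ : Fin K → Bool => ¬ ζ = (fun _ => false)),
        if ζ = (fun _ => false) then (0:ℝ) else ∏ m : Fin K, if ζ m then p else 1 - p)
        = ∑ ζ ∈ Finset.univ.filter (fun ζ : Fin K → Bool => ¬ ζ = (fun _ => false)),
          (∏ m : Fin K, if ζ m then p else 1 - p) := by
      apply Finset.sum_congr rfl
      intro ζ hζ
      rw [Finset.mem_filter] at hζ
      rw [if_neg hζ.2]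
    rw [h2]
    have h3 := Finset.sum_filter_add_sum_filter_not Finset.univ
      (fun ζ : Fin K → Bool => ¬ ζ = (fun _ => false))
      (fun ζ => ∏ m : Fin K, if ζ m then p else 1 - p)
    have h4 : ∑ ζ ∈ Finset.univ.filter (fun ζ : Fin K → Bool => ¬¬ ζ = (fun _ => false)),
        (∏ m : Fin K, if ζ m then p else 1 - p) = (1 - p) ^ K := by
      have : (Finset.univ.filter (fun ζ : Fin K → Bool => ¬¬ ζ = (fun _ => false)))
          = {fun _ => false} := by ext ζ; simp
      rw [this]; simp
    rw [htot, h4] at h3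
    linarith
  have hKne : (K : ℝ) ≠ 0 := Nat.cast_ne_zero.mpr (by omega)
  have : ∑ k' : Fin K, F k' = K * F k := by
    rw [Finset.sum_congr rfl fun k' _ => hsym k']
    simp [mul_comm]
  rw [this] at hsum
  show F k = _
  field_simp
  linarith
end
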